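/- Let X and Y be independent real random variables, each distributed as the standard Gaussian N(0,1). Then for every ε ≥ 0, the probability of the event { (1+ε)^{-1}·|Y| < |X| < (1+ε)·|Y| } equals (4/π)·arctan(1+ε) − 1; in particular, this probability is at most 2ε/π. -/

import Mathlib

open MeasureTheory ProbabilityTheory

section GrntAux
open Real Set

noncomputable def grntPhi : ℝ → ℝ := gaussianPDFReal 0 1

lemma grntPhi_eq (x : ℝ) : grntPhi x = (Real.sqrt (2 * π))⁻¹ * rexp (-x ^ 2 / 2) := by
  simp [grntPhi, gaussianPDFReal]

lemma grntPhi_nonneg (x : ℝ) : 0 ≤ grntPhi x := gaussianPDFReal_nonneg 0 1 x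

lemma grntPhi_even (x : ℝ) : grntPhi (-x) = grntPhi x := by simp [grntPhi_eq]

lemma grntPhi_cont : Continuous grntPhi := by
  simp only [funext grntPhi_eq]; fun_prop

lemma grntPhi_integrable : Integrable grntPhi := integrable_gaussianPDFReal 0 1

lemma grntPhi_integral : ∫ x, grntPhi x = 1 := integral_gaussianPDFReal_eq_one 0 one_ne_zero

lemma grntPhi_le (x : ℝ) : grntPhi x ≤ 1 := by
  rw [grntPhi_eq]
  have h1 : rexp (-x ^ 2 / 2) ≤ 1 := by
    rw [Real.exp_le_one_iff]; nlinarith [sq_nonneg x]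
  have h2 : (1:ℝ) ≤ Real.sqrt (2 * π) := by
    rw [show (1:ℝ) = Real.sqrt 1 by simp]
    exact Real.sqrt_le_sqrt (by nlinarith [Real.pi_gt_three])
  calc (Real.sqrt (2*π))⁻¹ * rexp (-x^2/2) ≤ 1 * 1 := by
        apply mul_le_mul _ h1 (Real.exp_nonneg _) zero_le_one
        exact inv_le_one_of_one_le₀ h2
    _ = 1 := by ring

/-- half gaussian moment -/
lemma grnt_half_moment {b : ℝ} (hb : 0 < b) :
    ∫ x in Ioi (0:ℝ), x * rexp (-b * x ^ 2) = (2 * b)⁻¹ := by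
  have := integral_Ioi_of_hasDerivAt_of_tendsto'
    (f := fun x : ℝ => -(2*b)⁻¹ * rexp (-b * x ^ 2))
    (f' := fun x : ℝ => x * rexp (-b * x ^ 2)) (a := 0) (m := 0)
    ?_ ?_ ?_
  · simpa using this
  · intro x _
    have h : HasDerivAt (fun x : ℝ => -b * x ^ 2) (-b * (2 * x)) x := by
      simpa using ((hasDerivAt_pow 2 x).const_mul (-b))
    have := (h.exp).const_mul (-(2*b)⁻¹)
    convert this using 1
    · rfl
    field_simp [hb.ne']
  · exact (integrable_mul_exp_neg_mul_sq hb).integrableOn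
  · have h : Filter.Tendsto (fun x : ℝ => -b * x ^ 2) Filter.atTop Filter.atBot := by
      apply Filter.Tendsto.const_mul_atTop_of_neg (neg_neg_iff_pos.mpr hb)
      exact Filter.tendsto_pow_atTop two_ne_zero
    have := (Real.tendsto_exp_atBot.comp h).const_mul (-(2*b)⁻¹)
    simpa using this

/-- key wedge integral -/
lemma grnt_key {a : ℝ} (ha : 0 < a) :
    ∫ x in Ioi (0:ℝ), grntPhi x * ∫ t in (0:ℝ)..(a*x), grntPhi t
      = arctan a / (2 * π) := by
  have pi_pos := Real.pi_pos
  -- step 1: rewrite integrand via substitution t = s * x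
  have h1 : ∀ x ∈ Ioi (0:ℝ),
      grntPhi x * ∫ t in (0:ℝ)..(a*x), grntPhi t
        = ∫ s in Ioc (0:ℝ) a, x * grntPhi x * grntPhi (s * x) := by
    intro x hx
    have hx0 : x ≠ 0 := ne_of_gt hx
    have hs : (∫ s in (0:ℝ)..a, grntPhi (s * x))
        = x⁻¹ • ∫ t in (0:ℝ)..(a*x), grntPhi t := by
      simpa using intervalIntegral.integral_comp_mul_right grntPhi hx0 (a := 0) (b := a)
    have : (∫ t in (0:ℝ)..(a*x), grntPhi t) = x * ∫ s in (0:ℝ)..a, grntPhi (s * x) := by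
      rw [hs, smul_eq_mul, ← mul_assoc, mul_inv_cancel₀ hx0, one_mul]
    rw [this, ← intervalIntegral.integral_of_le ha.le]
    calc grntPhi x * (x * ∫ s in (0:ℝ)..a, grntPhi (s * x))
        = (x * grntPhi x) * ∫ s in (0:ℝ)..a, grntPhi (s * x) := by ring
      _ = ∫ s in (0:ℝ)..a, x * grntPhi x * grntPhi (s * x) :=
          (intervalIntegral.integral_const_mul _ _).symm
  rw [setIntegral_congr_fun measurableSet_Ioi h1]
  -- step 2: Fubini
  have hcont : Continuous (fun p : ℝ × ℝ => p.1 * grntPhi p.1 * grntPhi (p.2 * p.1)) := by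
    have := grntPhi_cont
    fun_prop
  have hdom : Integrable (fun p : ℝ × ℝ => p.1 * grntPhi p.1)
      ((volume.restrict (Ioi (0:ℝ))).prod (volume.restrict (Ioc (0:ℝ) a))) := by
    have h1 : IntegrableOn (fun x : ℝ => x * grntPhi x) (Ioi 0) := by
      apply Integrable.integrableOn
      simp only [funext grntPhi_eq]
      have := (integrable_mul_exp_neg_mul_sq (b := (1:ℝ)/2) (by norm_num)).const_mul
        ((Real.sqrt (2 * π))⁻¹)
      apply this.congr' ?_ ?_
      · exact (continuous_id.mul grntPhi_cont).aestronglyMeasurable.congr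
          (by simp only [funext grntPhi_eq]; rfl)
      · filter_upwards with x
        rw [Real.norm_eq_abs, Real.norm_eq_abs]
        congr 1
        ring_nf
    have h2 : Integrable (fun _ : ℝ => (1:ℝ)) (volume.restrict (Ioc (0:ℝ) a)) :=
      integrable_const 1
    simpa using Integrable.mul_prod h1 h2
  have hint : Integrable (Function.uncurry fun x s : ℝ => x * grntPhi x * grntPhi (s * x))
      ((volume.restrict (Ioi (0:ℝ))).prod (volume.restrict (Ioc (0:ℝ) a))) := by
    apply hdom.mono' hcont.aestronglyMeasurable
    rw [Measure.prod_restrict]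
    filter_upwards [ae_restrict_mem (measurableSet_Ioi.prod measurableSet_Ioc)] with p hp
    rcases hp with ⟨hp1, _⟩
    have hx : (0:ℝ) < p.1 := hp1
    simp only [Function.uncurry, Real.norm_eq_abs]
    rw [abs_mul, abs_mul]
    have : |grntPhi (p.2 * p.1)| ≤ 1 := by
      rw [abs_of_nonneg (grntPhi_nonneg _)]; exact grntPhi_le _
    calc |p.1| * |grntPhi p.1| * |grntPhi (p.2 * p.1)| ≤ |p.1| * |grntPhi p.1| * 1 := by
          apply mul_le_mul_of_nonneg_left this (by positivity)
      _ = p.1 * grntPhi p.1 := by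
          rw [mul_one, abs_of_pos hx, abs_of_nonneg (grntPhi_nonneg _)]
  rw [MeasureTheory.integral_integral_swap hint]
  -- step 3: inner integral
  have h3 : ∀ s ∈ Ioc (0:ℝ) a,
      (∫ x in Ioi (0:ℝ), x * grntPhi x * grntPhi (s * x))
        = (2*π)⁻¹ * (1 + s^2)⁻¹ := by
    intro s _
    have heq : ∀ x : ℝ, x * grntPhi x * grntPhi (s * x)
        = (2*π)⁻¹ * (x * rexp (-((1 + s^2)/2) * x ^ 2)) := by
      intro x
      rw [grntPhi_eq, grntPhi_eq]
      have hsq : (Real.sqrt (2*π))⁻¹ * (Real.sqrt (2*π))⁻¹ = (2*π)⁻¹ := by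
        rw [← mul_inv, Real.mul_self_sqrt (by positivity)]
      calc x * ((Real.sqrt (2*π))⁻¹ * rexp (-x^2/2)) * ((Real.sqrt (2*π))⁻¹ * rexp (-(s*x)^2/2))
          = ((Real.sqrt (2*π))⁻¹ * (Real.sqrt (2*π))⁻¹) * (x * (rexp (-x^2/2) * rexp (-(s*x)^2/2))) := by ring
        _ = (2*π)⁻¹ * (x * rexp (-((1 + s^2)/2) * x ^ 2)) := by
            rw [hsq, ← Real.exp_add]
            congr 2
            ring
    simp only [heq]
    rw [MeasureTheory.integral_const_mul, grnt_half_moment (by positivity)]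
    congr 1
    field_simp
  rw [setIntegral_congr_fun measurableSet_Ioc h3]
  -- step 4: arctan
  rw [MeasureTheory.integral_const_mul, ← intervalIntegral.integral_of_le ha.le]
  have : (∫ s in (0:ℝ)..a, (1 + s^2)⁻¹) = arctan a := by
    have := integral_one_div_one_add_sq (a := 0) (b := a)
    simp only [one_div] at this
    rw [this, arctan_zero, sub_zero]
  rw [this]
  ring

noncomputable def grntH (u : ℝ) : ℝ := ∫ t in (0:ℝ)..u, grntPhi t

lemma grntH_cont : Continuous grntH :=
  intervalIntegral.continuous_primitive (fun _ _ => grntPhi_integrable.intervalIntegrable) 0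

lemma grntH_sub {a b : ℝ} (hab : a ≤ b) : grntH b - grntH a = ∫ t in a..b, grntPhi t := by
  exact intervalIntegral.integral_interval_sub_left grntPhi_integrable.intervalIntegrable
    grntPhi_integrable.intervalIntegrable

lemma grntH_sub_nonneg {a b : ℝ} (hab : a ≤ b) : 0 ≤ grntH b - grntH a := by
  rw [grntH_sub hab]
  exact intervalIntegral.integral_nonneg hab (fun t _ => grntPhi_nonneg t)

lemma grntH_sub_le_one {a b : ℝ} (hab : a ≤ b) : grntH b - grntH a ≤ 1 := by
  rw [grntH_sub hab, intervalIntegral.integral_of_le hab, ← grntPhi_integral]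
  exact setIntegral_le_integral grntPhi_integrable
    (Filter.Eventually.of_forall (fun t => grntPhi_nonneg t))

/-- the gaussian measure of the slice -/
lemma grnt_slice {c : ℝ} (hc : 1 ≤ c) (x : ℝ) :
    gaussianReal 0 1 {y : ℝ | c⁻¹ * |y| < |x| ∧ |x| < c * |y|}
      = ENNReal.ofReal (2 * (grntH (c * |x|) - grntH (|x| / c))) := by
  have hc0 : (0:ℝ) < c := lt_of_lt_of_le one_pos hc
  have hci : c * c⁻¹ = 1 := mul_inv_cancel₀ (ne_of_gt hc0)
  set a := |x| / c with ha_def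
  set b := c * |x| with hb_def
  have hxa : (0:ℝ) ≤ |x| := abs_nonneg x
  have ha0 : 0 ≤ a := by positivity
  have hab : a ≤ b := by
    rw [ha_def, hb_def, div_le_iff₀ hc0]
    calc |x| ≤ c * |x| := le_mul_of_one_le_left hxa hc
      _ ≤ c * |x| * c := le_mul_of_one_le_right (by positivity) hc
  have hset : {y : ℝ | c⁻¹ * |y| < |x| ∧ |x| < c * |y|}
      = Ioo (-b) (-a) ∪ Ioo a b := by
    ext y
    simp only [mem_setOf_eq, mem_union, mem_Ioo]
    have key : (c⁻¹ * |y| < |x| ∧ |x| < c * |y|) ↔ (a < |y| ∧ |y| < b) := by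
      rw [ha_def, hb_def]
      constructor
      · rintro ⟨h1, h2⟩
        constructor
        · rw [div_lt_iff₀ hc0]; nlinarith
        · nlinarith [mul_lt_mul_of_pos_left h1 hc0]
      · rintro ⟨h1, h2⟩
        rw [div_lt_iff₀ hc0] at h1
        constructor
        · nlinarith [mul_lt_mul_of_pos_left h2 (inv_pos.mpr hc0)]
        · nlinarith
    rw [key]
    rcases le_or_gt 0 y with hy | hy
    · rw [abs_of_nonneg hy]
      constructor
      · rintro ⟨h1, h2⟩; exact Or.inr ⟨h1, h2⟩
      · rintro (⟨h1, h2⟩ | ⟨h1, h2⟩) <;> constructor <;> linarith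
    · rw [abs_of_neg hy]
      constructor
      · rintro ⟨h1, h2⟩; exact Or.inl ⟨by linarith, by linarith⟩
      · rintro (⟨h1, h2⟩ | ⟨h1, h2⟩) <;> constructor <;> linarith
  rw [hset]
  have hdisj : Disjoint (Ioo (-b) (-a)) (Ioo a b) := by
    rw [Set.disjoint_left]
    rintro y ⟨_, h2⟩ ⟨h3, _⟩
    linarith
  rw [measure_union hdisj measurableSet_Ioo,
    gaussianReal_apply_eq_integral 0 one_ne_zero,
    gaussianReal_apply_eq_integral 0 one_ne_zero]
  have hneg : (∫ y in Ioo (-b) (-a), gaussianPDFReal 0 1 y)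
      = ∫ t in Ioo a b, gaussianPDFReal 0 1 t := by
    rw [← integral_Ioc_eq_integral_Ioo, ← integral_Ioc_eq_integral_Ioo,
      ← intervalIntegral.integral_of_le (by linarith : -b ≤ -a),
      ← intervalIntegral.integral_of_le hab,
      ← intervalIntegral.integral_comp_neg (fun t => gaussianPDFReal 0 1 t)]
    congr 1 with t
    exact grntPhi_even t
  rw [hneg, ← ENNReal.ofReal_add, ← two_mul]
  · congr 1
    rw [grntH_sub hab, intervalIntegral.integral_of_le hab, integral_Ioc_eq_integral_Ioo]
    rfl
  all_goals
    rw [← integral_Ioc_eq_integral_Ioo, ← intervalIntegral.integral_of_le hab]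
    exact intervalIntegral.integral_nonneg hab (fun t _ => grntPhi_nonneg t)

lemma grntH_zero : grntH 0 = 0 := by simp [grntH]

lemma grntPhi_abs (x : ℝ) : grntPhi |x| = grntPhi x := by
  rcases abs_choice x with h | h
  · rw [h]
  · rw [h, grntPhi_even]

lemma grnt_integrable {a : ℝ} (ha : 0 < a) :
    IntegrableOn (fun x => grntPhi x * grntH (a * x)) (Ioi (0:ℝ)) := by
  apply Integrable.mono' grntPhi_integrable.integrableOn
  · exact (grntPhi_cont.mul (grntH_cont.comp (continuous_const.mul continuous_id))).aestronglyMeasurable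
  · filter_upwards [ae_restrict_mem measurableSet_Ioi] with x hx
    have hx0 : (0:ℝ) < x := hx
    have h0 : 0 ≤ grntH (a * x) := by
      have := grntH_sub_nonneg (a := 0) (b := a * x) (by positivity)
      rwa [grntH_zero, sub_zero] at this
    have h1 : grntH (a * x) ≤ 1 := by
      have := grntH_sub_le_one (a := 0) (b := a * x) (by positivity)
      rwa [grntH_zero, sub_zero] at this
    rw [Real.norm_eq_abs, abs_mul, abs_of_nonneg (grntPhi_nonneg _), abs_of_nonneg h0]
    calc grntPhi x * grntH (a * x) ≤ grntPhi x * 1 :=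
          mul_le_mul_of_nonneg_left h1 (grntPhi_nonneg _)
      _ = grntPhi x := mul_one _

lemma grnt_real {c : ℝ} (hc : 1 ≤ c) :
    ∫ x : ℝ, 2 * (grntH (c * |x|) - grntH (|x| / c)) * grntPhi x
      = (4 / π) * arctan c - 1 := by
  have hc0 : (0:ℝ) < c := lt_of_lt_of_le one_pos hc
  have pi_pos := Real.pi_pos
  have hfun : (fun x : ℝ => 2 * (grntH (c * |x|) - grntH (|x| / c)) * grntPhi x)
      = fun x : ℝ => (fun u : ℝ => 2 * (grntH (c * u) - grntH (u / c)) * grntPhi u) |x| := by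
    funext x
    simp only [grntPhi_abs]
  calc ∫ x : ℝ, 2 * (grntH (c * |x|) - grntH (|x| / c)) * grntPhi x
      = ∫ x : ℝ, (fun u : ℝ => 2 * (grntH (c * u) - grntH (u / c)) * grntPhi u) |x| := by
        rw [hfun]
    _ = 2 * ∫ x in Ioi (0:ℝ), 2 * (grntH (c * x) - grntH (x / c)) * grntPhi x :=
        integral_comp_abs (f := fun u : ℝ => 2 * (grntH (c * u) - grntH (u / c)) * grntPhi u)
    _ = 2 * ∫ x in Ioi (0:ℝ),
          2 * (grntPhi x * grntH (c * x) - grntPhi x * grntH (c⁻¹ * x)) := by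
        congr 1
        apply setIntegral_congr_fun measurableSet_Ioi
        intro x _
        simp only [div_eq_inv_mul]
        ring
    _ = 2 * (2 * ((∫ x in Ioi (0:ℝ), grntPhi x * grntH (c * x))
          - ∫ x in Ioi (0:ℝ), grntPhi x * grntH (c⁻¹ * x))) := by
        rw [MeasureTheory.integral_const_mul, integral_sub (grnt_integrable hc0)
          (grnt_integrable (inv_pos.mpr hc0))]
    _ = 2 * (2 * (arctan c / (2 * π) - arctan c⁻¹ / (2 * π))) := by
        have e1 : ∀ x : ℝ, grntPhi x * grntH (c * x)
            = grntPhi x * ∫ t in (0:ℝ)..(c * x), grntPhi t := fun x => rfl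
        rw [show (∫ x in Ioi (0:ℝ), grntPhi x * grntH (c * x))
            = arctan c / (2 * π) from grnt_key hc0,
          show (∫ x in Ioi (0:ℝ), grntPhi x * grntH (c⁻¹ * x))
            = arctan c⁻¹ / (2 * π) from grnt_key (inv_pos.mpr hc0)]
    _ = (4 / π) * arctan c - 1 := by
        rw [arctan_inv_of_pos hc0]
        field_simp
        ring

lemma grnt_hab {c : ℝ} (hc : 1 ≤ c) (x : ℝ) : |x| / c ≤ c * |x| := by
  have hc0 : (0:ℝ) < c := lt_of_lt_of_le one_pos hc
  rw [div_le_iff₀ hc0]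
  calc |x| ≤ c * |x| := le_mul_of_one_le_left (abs_nonneg x) hc
    _ ≤ c * |x| * c := le_mul_of_one_le_right (by positivity) hc

lemma grnt_prod {c : ℝ} (hc : 1 ≤ c) :
    ((gaussianReal 0 1).prod (gaussianReal 0 1))
      {p : ℝ × ℝ | c⁻¹ * |p.2| < |p.1| ∧ |p.1| < c * |p.2|}
    = ENNReal.ofReal ((4 / π) * arctan c - 1) := by
  have hc0 : (0:ℝ) < c := lt_of_lt_of_le one_pos hc
  set g : ℝ → ℝ := fun x => 2 * (grntH (c * |x|) - grntH (|x| / c)) with hg_def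
  have hg0 : ∀ x, 0 ≤ g x := fun x =>
    mul_nonneg (by norm_num) (grntH_sub_nonneg (grnt_hab hc x))
  have hg2 : ∀ x, g x ≤ 2 := fun x => by
    have := grntH_sub_le_one (grnt_hab hc x)
    rw [hg_def]
    nlinarith
  have hgc : Continuous g :=
    continuous_const.mul ((grntH_cont.comp (continuous_const.mul continuous_abs)).sub
      (grntH_cont.comp (continuous_abs.div_const c)))
  have hS : MeasurableSet {p : ℝ × ℝ | c⁻¹ * |p.2| < |p.1| ∧ |p.1| < c * |p.2|} := by
    apply MeasurableSet.inter
    · exact measurableSet_lt (measurable_snd.abs.const_mul _) measurable_fst.abs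
    · exact measurableSet_lt measurable_fst.abs (measurable_snd.abs.const_mul _)
  rw [Measure.prod_apply hS]
  have h1 : (∫⁻ x, gaussianReal 0 1
        (Prod.mk x ⁻¹' {p : ℝ × ℝ | c⁻¹ * |p.2| < |p.1| ∧ |p.1| < c * |p.2|})
        ∂(gaussianReal 0 1))
      = ∫⁻ x, ENNReal.ofReal (g x) ∂(gaussianReal 0 1) :=
    lintegral_congr fun x => grnt_slice hc x
  rw [h1, gaussianReal_of_var_ne_zero 0 one_ne_zero,
    lintegral_withDensity_eq_lintegral_mul volume (measurable_gaussianPDF 0 1)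
      (hgc.measurable.ennreal_ofReal)]
  have h2 : ∀ x : ℝ, (gaussianPDF 0 1 * fun x => ENNReal.ofReal (g x)) x
      = ENNReal.ofReal (grntPhi x * g x) := by
    intro x
    simp only [Pi.mul_apply, gaussianPDF]
    rw [show gaussianPDFReal 0 1 x = grntPhi x from rfl,
      ← ENNReal.ofReal_mul (grntPhi_nonneg x)]
  rw [lintegral_congr h2]
  have hint : Integrable (fun x => grntPhi x * g x) := by
    apply Integrable.mono' (grntPhi_integrable.const_mul 2)
      (grntPhi_cont.mul hgc).aestronglyMeasurable
    filter_upwards with x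
    rw [Real.norm_eq_abs, Pi.mul_apply, abs_of_nonneg (mul_nonneg (grntPhi_nonneg x) (hg0 x))]
    calc grntPhi x * g x ≤ grntPhi x * 2 :=
          mul_le_mul_of_nonneg_left (hg2 x) (grntPhi_nonneg x)
      _ = 2 * grntPhi x := mul_comm _ _
  rw [← ofReal_integral_eq_lintegral_ofReal hint
    (Filter.Eventually.of_forall fun x => mul_nonneg (grntPhi_nonneg x) (hg0 x))]
  congr 1
  calc ∫ x, grntPhi x * g x = ∫ x, g x * grntPhi x := by
        apply integral_congr_ae
        filter_upwards with x using mul_comm _ _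
    _ = (4 / π) * arctan c - 1 := grnt_real hc

lemma grnt_arctan_bound {ε : ℝ} (hε : 0 ≤ ε) : arctan (1 + ε) ≤ π / 4 + ε / 2 := by
  have h1 : arctan (1 + ε) - arctan 1 = ∫ x in (1:ℝ)..(1 + ε), 1 / (1 + x ^ 2) := by
    rw [integral_one_div_one_add_sq]
  have hint1 : IntervalIntegrable (fun x : ℝ => 1 / (1 + x ^ 2)) volume 1 (1 + ε) := by
    apply Continuous.intervalIntegrable
    apply continuous_const.div (by fun_prop)
    intro x
    positivity
  have h2 : (∫ x in (1:ℝ)..(1 + ε), 1 / (1 + x ^ 2))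
      ≤ ∫ _x in (1:ℝ)..(1 + ε), (1:ℝ) / 2 := by
    apply intervalIntegral.integral_mono_on (by linarith) hint1 intervalIntegrable_const
    intro x hx
    rw [div_le_div_iff₀ (by positivity) (by norm_num)]
    have : 1 ≤ x := hx.1
    nlinarith
  have h3 : (∫ _x in (1:ℝ)..(1 + ε), (1:ℝ) / 2) = ε / 2 := by
    rw [intervalIntegral.integral_const]
    simp
    ring
  rw [Real.arctan_one] at h1
  linarith

end GrntAux

section
open Real Set

/-- Gaussian ratio near-tie probability (quantitative form of Fact B.1 /
`fact:gaussian-ratio` used at initialization): for independent standard Gaussians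
`X, Y`, the probability that `|X|/|Y|` lies strictly between `(1+ε)⁻¹` and `1+ε`
equals `(4/π)·arctan(1+ε) − 1`, which is at most `2ε/π`. -/
theorem gaussian_ratio_near_tie {Ω : Type*} [MeasurableSpace Ω]
    (μ : Measure Ω) [IsProbabilityMeasure μ]
    (X Y : Ω → ℝ) (hX : Measurable X) (hY : Measurable Y)
    (hind : IndepFun X Y μ)
    (hXlaw : μ.map X = gaussianReal 0 1) (hYlaw : μ.map Y = gaussianReal 0 1)
    (ε : ℝ) (hε : 0 ≤ ε) :
    μ {ω | (1 + ε)⁻¹ * |Y ω| < |X ω| ∧ |X ω| < (1 + ε) * |Y ω|}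
        = ENNReal.ofReal ((4 / Real.pi) * Real.arctan (1 + ε) - 1) ∧
      μ {ω | (1 + ε)⁻¹ * |Y ω| < |X ω| ∧ |X ω| < (1 + ε) * |Y ω|}
        ≤ ENNReal.ofReal (2 * ε / Real.pi) := by
  have hc : (1:ℝ) ≤ 1 + ε := by linarith
  have pi_pos := Real.pi_pos
  have hS : MeasurableSet {p : ℝ × ℝ | (1 + ε)⁻¹ * |p.2| < |p.1| ∧ |p.1| < (1 + ε) * |p.2|} := by
    apply MeasurableSet.inter
    · exact measurableSet_lt (measurable_snd.abs.const_mul _) measurable_fst.abs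
    · exact measurableSet_lt measurable_fst.abs (measurable_snd.abs.const_mul _)
  have hmap : μ.map (fun ω => (X ω, Y ω)) = (gaussianReal 0 1).prod (gaussianReal 0 1) := by
    rw [(indepFun_iff_map_prod_eq_prod_map_map hX.aemeasurable hY.aemeasurable).mp hind,
      hXlaw, hYlaw]
  have hμ : μ {ω | (1 + ε)⁻¹ * |Y ω| < |X ω| ∧ |X ω| < (1 + ε) * |Y ω|}
      = ENNReal.ofReal ((4 / π) * arctan (1 + ε) - 1) := by
    have hev : {ω | (1 + ε)⁻¹ * |Y ω| < |X ω| ∧ |X ω| < (1 + ε) * |Y ω|}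
        = (fun ω => (X ω, Y ω)) ⁻¹'
          {p : ℝ × ℝ | (1 + ε)⁻¹ * |p.2| < |p.1| ∧ |p.1| < (1 + ε) * |p.2|} := rfl
    rw [hev, ← Measure.map_apply (hX.prodMk hY) hS, hmap, grnt_prod hc]
  refine ⟨hμ, ?_⟩
  rw [hμ]
  apply ENNReal.ofReal_le_ofReal
  have harc := grnt_arctan_bound hε
  have h4 : (4 / π) * arctan (1 + ε) ≤ (4 / π) * (π / 4 + ε / 2) :=
    mul_le_mul_of_nonneg_left harc (by positivity)
  have h5 : (4 / π) * (π / 4 + ε / 2) = 1 + 2 * ε / π := by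
    field_simp
    ring
  linarith

end
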